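/- Let q be a prime power and let l_1 and l_2 be distinct odd primes coprime to q. If all monic irreducible factors of x^{l_1} − 1 and of x^{l_2} − 1 over F_{q^2} are SCRIM and gcd(ord_{l_1}(q^2), ord_{l_2}(q^2)) = 1, then the number of SCRIM factors of x^{l_1 l_2} − 1 over F_{q^2} satisfies |Ω_{q^2,l_1 l_2}| = |Ω_{q^2,l_1}| · |Ω_{q^2,l_2}|. -/

import Mathlib

open Polynomial

/-- The reciprocal polynomial `f*(x) = x^(deg f) * f(0)⁻¹ * f(1/x)`. -/
noncomputable def crecip {F : Type*} [Field F] (f : F[X]) : F[X] :=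
  C (f.coeff 0)⁻¹ * f.reverse

/-- The conjugate-reciprocal polynomial `f†`, obtained by applying the
conjugation `a ↦ a ^ q` to each coefficient of `f*`. -/
noncomputable def cdagger {F : Type*} [Field F] (q : ℕ) (f : F[X]) : F[X] :=
  (crecip f).sum fun i a => C (a ^ q) * X ^ i

/-- A polynomial is SCRIM if it is monic, irreducible, and self-conjugate-reciprocal. -/
def IsSCRIM {F : Type*} [Field F] (q : ℕ) (f : F[X]) : Prop :=
  f.Monic ∧ Irreducible f ∧ f = cdagger q f

/-- The set `Ω_{q²,n}` of SCRIM factors of `x^n - 1` over `F = F_{q²}`. -/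
def scrimFactors (F : Type*) [Field F] (q n : ℕ) : Set F[X] :=
  {f | IsSCRIM q f ∧ f ∣ X ^ n - 1}

/- ============ auxiliary lemmas ============ -/

private lemma pow_eq_pow_of_modEq' {M : Type*} [Monoid M] (u : M) {c a : ℕ}
    (h : c ≡ a [MOD orderOf u]) : u ^ c = u ^ a := by
  rcases le_total a c with hle | hle
  · obtain ⟨s, hs⟩ := (Nat.modEq_iff_dvd' hle).mp h.symm
    have : c = a + orderOf u * s := by omega
    rw [this, pow_add, pow_mul, pow_orderOf_eq_one, one_pow, mul_one]
  · obtain ⟨s, hs⟩ := (Nat.modEq_iff_dvd' hle).mp h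
    have : a = c + orderOf u * s := by omega
    rw [this, pow_add, pow_mul, pow_orderOf_eq_one, one_pow, mul_one]

/-- congruence mod `orderOf ((q : ZMod l)^2)` gives congruence of powers of `q^2` mod `l`. -/
private lemma modeq_pow_qsq {l q c a : ℕ}
    (h : c ≡ a [MOD orderOf ((q : ZMod l) ^ 2)]) : (q ^ 2) ^ c ≡ (q ^ 2) ^ a [MOD l] := by
  have h2 := pow_eq_pow_of_modEq' ((q : ZMod l) ^ 2) h
  have : (((q ^ 2) ^ c : ℕ) : ZMod l) = (((q ^ 2) ^ a : ℕ) : ZMod l) := by push_cast; exact h2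
  exact (ZMod.natCast_eq_natCast_iff _ _ _).mp this

private lemma pow_frob_congr {M : Type*} [Monoid M] (u : M) {l : ℕ} (hu : u ^ l = 1)
    {b c a : ℕ} (h : b ^ c ≡ b ^ a [MOD l]) : u ^ b ^ c = u ^ b ^ a :=
  pow_eq_pow_of_modEq' u (h.of_dvd (orderOf_dvd_of_pow_eq_one hu))

private lemma units_eq_of_pows {G : Type*} [CommGroup G] {x y : G} {l₁ l₂ : ℕ}
    (hco : Nat.Coprime l₁ l₂) (h1 : x ^ l₁ = y ^ l₁) (h2 : x ^ l₂ = y ^ l₂) : x = y := by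
  have e1 : (x * y⁻¹) ^ l₁ = 1 := by
    rw [mul_pow, h1, inv_pow, mul_inv_cancel]
  have e2 : (x * y⁻¹) ^ l₂ = 1 := by
    rw [mul_pow, h2, inv_pow, mul_inv_cancel]
  have : orderOf (x * y⁻¹) ∣ 1 := by
    rw [← hco]
    exact Nat.dvd_gcd (orderOf_dvd_of_pow_eq_one e1) (orderOf_dvd_of_pow_eq_one e2)
  have h3 : x * y⁻¹ = 1 := orderOf_eq_one_iff.mp (Nat.dvd_one.mp this)
  rw [mul_inv_eq_one] at h3; exact h3

private lemma eq_of_monic_dvd_deg {R : Type*} [CommRing R] [IsDomain R] {f g : R[X]}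
    (hf : f.Monic) (hg : g.Monic) (hdvd : f ∣ g) (hdeg : g.natDegree ≤ f.natDegree) : f = g := by
  obtain ⟨u, rfl⟩ := hdvd
  have hf0 : f ≠ 0 := hf.ne_zero
  have hu0 : u ≠ 0 := by rintro rfl; rw [mul_zero] at hg; exact hg.ne_zero rfl
  have hmul := natDegree_mul hf0 hu0
  have hu : u.natDegree = 0 := by omega
  have huC : u = C (u.coeff 0) := eq_C_of_natDegree_eq_zero hu
  have hlc : (f * u).leadingCoeff = 1 := hg
  rw [leadingCoeff_mul, hf.leadingCoeff, one_mul, huC, leadingCoeff_C] at hlc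
  rw [huC, hlc, map_one, mul_one]

private lemma aux_charP {F : Type*} [Field F] [Fintype F] {p k : ℕ} (hp : p.Prime) (hk : 0 < k)
    (h : Fintype.card F = p ^ k) : CharP F p := by
  obtain ⟨n, hrp, hcard⟩ := FiniteField.card F (ringChar F)
  have hdvd : ringChar F ∣ p ^ k := by
    rw [← h, hcard]; exact dvd_pow_self _ (by positivity)
  have : ringChar F = p := by
    have := hrp.dvd_of_dvd_pow (n := k) (m := p) hdvd
    exact (Nat.prime_dvd_prime_iff_eq hrp hp).mp this
  rw [← this]; exact ringChar.charP F

private lemma mem_range_of_pow_card {F K : Type*} [Field F] [Fintype F] [Field K] [Algebra F K]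
    {c : K} (h : c ^ Fintype.card F = c) : c ∈ Set.range (algebraMap F K) := by
  classical
  set Q := Fintype.card F with hQ
  have hQ2 : 2 ≤ Q := Fintype.one_lt_card
  set g : K[X] := X ^ Q - X with hg
  have hdeg : g.natDegree = Q := by
    rw [hg]
    have h1 : (X : K[X]).natDegree < (X ^ Q : K[X]).natDegree := by
      simpa using by omega
    rw [natDegree_sub_eq_left_of_natDegree_lt h1, natDegree_X_pow]
  have hgne : g ≠ 0 := fun h0 => by simp [h0, hQ2] at hdeg; omega
  have hroot : ∀ x : K, x ^ Q = x → g.IsRoot x := by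
    intro x hx; simp [hg, IsRoot, hx]
  set T : Finset K := Finset.univ.image (algebraMap F K) with hT
  by_contra hc
  have hcT : c ∉ T := by
    intro hmem; rw [hT, Finset.mem_image] at hmem
    obtain ⟨a, -, ha⟩ := hmem; exact hc ⟨a, ha⟩
  have hsub : insert c T ⊆ g.roots.toFinset := by
    intro x hx
    rw [Multiset.mem_toFinset, mem_roots hgne]
    rcases Finset.mem_insert.mp hx with rfl | hx
    · exact hroot _ h
    · rw [hT, Finset.mem_image] at hx
      obtain ⟨a, -, rfl⟩ := hx
      refine hroot _ ?_
      rw [← map_pow, FiniteField.pow_card]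
  have hTcard : T.card = Q := by
    rw [hT, Finset.card_image_of_injective _ (algebraMap F K).injective, Finset.card_univ]
  have h1 : Q + 1 ≤ g.roots.toFinset.card := by
    have := Finset.card_le_card hsub
    rwa [Finset.card_insert_of_notMem hcT, hTcard] at this
  have hle : g.roots.toFinset.card ≤ Q := by
    calc g.roots.toFinset.card ≤ Multiset.card g.roots := g.roots.toFinset_card_le
    _ ≤ g.natDegree := g.card_roots'
    _ = Q := hdeg
  omega

private lemma aeval_comm {F K : Type*} [Field F] [Field K] [Algebra F K] (Φ : K →+* K)
    (hΦ : ∀ a : F, Φ (algebraMap F K a) = algebraMap F K a) (f : F[X]) (t : K) :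
    aeval (Φ t) f = Φ (aeval t f) := by
  rw [aeval_def, aeval_def, hom_eval₂]
  congr 1
  ext a
  exact (hΦ a).symm

private lemma aeval_pow_card {F : Type*} [Field F] [Fintype F] {p : ℕ} (hp : p.Prime)
    (hchar : CharP F p) (f : F[X]) (t : AlgebraicClosure F) :
    aeval (t ^ Fintype.card F) f = (aeval t f) ^ Fintype.card F := by
  haveI := hchar
  haveI := Fact.mk hp
  obtain ⟨n, -, hcard⟩ := FiniteField.card F p
  have key := aeval_comm (F := F) (iterateFrobenius (AlgebraicClosure F) p n)
    (fun a => by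
      rw [iterateFrobenius_def, ← map_pow, ← hcard, FiniteField.pow_card]) f t
  rw [iterateFrobenius_def, ← hcard] at key
  rw [key, iterateFrobenius_def, ← hcard]

private lemma cdagger_eq_map {F : Type*} [Field F] {q : ℕ} (φ : F →+* F)
    (hφ : ∀ a, φ a = a ^ q) (f : F[X]) :
    cdagger q f = (crecip f).map φ := by
  show _ = eval₂ (C.comp φ) X (crecip f)
  rw [eval₂_eq_sum, cdagger]
  congr 1
  funext i a
  simp [hφ]

private lemma aeval_cdagger_root {F : Type*} [Field F] {p k q : ℕ} (hp : p.Prime)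
    (hchar : CharP F p) (hkq : p ^ k = q) {f : F[X]} {t : AlgebraicClosure F}
    (ht : t ≠ 0) (hroot : aeval t f = 0) :
    aeval ((t⁻¹) ^ q) (cdagger q f) = 0 := by
  haveI := hchar
  haveI := Fact.mk hp
  set φ : F →+* F := iterateFrobenius F p k with hφdef
  have hφ : ∀ a, φ a = a ^ q := fun a => by rw [hφdef, iterateFrobenius_def, hkq]
  set Φ : AlgebraicClosure F →+* AlgebraicClosure F := iterateFrobenius (AlgebraicClosure F) p k
    with hΦdef
  have hΦ : ∀ a : AlgebraicClosure F, Φ a = a ^ q := fun a => by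
    rw [hΦdef, iterateFrobenius_def, hkq]
  rw [cdagger_eq_map φ hφ]
  rw [aeval_def, eval₂_map]
  have hcomm : (algebraMap F (AlgebraicClosure F)).comp φ =
      Φ.comp (algebraMap F (AlgebraicClosure F)) := by
    ext a
    simp [hφ, hΦ, map_pow]
  rw [hcomm]
  have hq : (t⁻¹) ^ q = Φ t⁻¹ := by rw [hΦ]
  rw [hq, ← hom_eval₂]
  suffices h : eval₂ (algebraMap F (AlgebraicClosure F)) t⁻¹ (crecip f) = 0 by rw [h, map_zero]
  rw [crecip, eval₂_mul, eval₂_C]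
  have hrev : eval₂ (algebraMap F (AlgebraicClosure F)) t⁻¹ (reverse f) = 0 := by
    haveI : Invertible t := invertibleOfNonzero ht
    have h2 := (eval₂_reverse_eq_zero_iff (algebraMap F (AlgebraicClosure F)) t f).mpr
      (by rwa [aeval_def] at hroot)
    rwa [invOf_eq_inv] at h2
  rw [hrev, mul_zero]

private lemma aeval_pow_card_pow_root {F : Type*} [Field F] [Fintype F] {p q : ℕ}
    (hp : p.Prime) (hchar : CharP F p) (hF : Fintype.card F = q ^ 2)
    {f : F[X]} {t : AlgebraicClosure F} (h : aeval t f = 0) (j : ℕ) :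
    aeval (t ^ (q ^ 2) ^ j) f = 0 := by
  induction j with
  | zero => simpa using h
  | succ j ih =>
    have key := aeval_pow_card hp hchar f (t ^ (q ^ 2) ^ j)
    rw [hF] at key
    rw [pow_succ, pow_mul, key, ih, zero_pow (by rw [← hF]; exact Fintype.card_ne_zero)]

private lemma unit_pow_integral {F : Type*} [Field F] {n : ℕ} (hn : n ≠ 0)
    {t : AlgebraicClosure F} (ht : t ^ n = 1) : IsIntegral F t := by
  refine ⟨X ^ n - C 1, monic_X_pow_sub_C 1 hn, ?_⟩
  simp [eval₂_sub, ht]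

private lemma minpoly_dvd_X_pow_sub_one {F : Type*} [Field F] {n : ℕ}
    {t : AlgebraicClosure F} (ht : t ^ n = 1) :
    minpoly F t ∣ (X : F[X]) ^ n - 1 := by
  refine minpoly.dvd F t ?_
  simp [ht]

private lemma coeff_zero_ne {F : Type*} [Field F] {n : ℕ} (hn : n ≠ 0) {f : F[X]}
    (hdvd : f ∣ (X : F[X]) ^ n - 1) : f.coeff 0 ≠ 0 := by
  intro h0
  have hX : (X : F[X]) ∣ f := X_dvd_iff.mpr h0
  have : (X : F[X]) ∣ X ^ n - 1 := hX.trans hdvd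
  have := X_dvd_iff.mp this
  rw [coeff_sub, coeff_X_pow, coeff_one] at this
  rw [if_neg (by omega : ¬ (0 = n))] at this
  simp at this

/-- if `x⁻¹ ^ q` is a root of the minimal polynomial of a root of unity `x`,
then that minimal polynomial is SCRIM. -/
private lemma scrim_of_conj {F : Type*} [Field F] {p k q n : ℕ} (hp : p.Prime)
    (hchar : CharP F p) (hkq : p ^ k = q) (hn : n ≠ 0) (x : (AlgebraicClosure F)ˣ)
    (hx : ((x : AlgebraicClosure F)) ^ n = 1)
    (hconj : aeval (((x : AlgebraicClosure F))⁻¹ ^ q) (minpoly F (x : AlgebraicClosure F)) = 0) :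
    IsSCRIM q (minpoly F (x : AlgebraicClosure F)) := by
  set t : AlgebraicClosure F := (x : AlgebraicClosure F) with htdef
  have hint : IsIntegral F t := unit_pow_integral hn hx
  set f := minpoly F t with hfdef
  have hmon : f.Monic := minpoly.monic hint
  have hirr : Irreducible f := minpoly.irreducible hint
  have h0 : f.coeff 0 ≠ 0 := coeff_zero_ne hn (minpoly_dvd_X_pow_sub_one hx)
  refine ⟨hmon, hirr, ?_⟩
  -- degree facts
  have htd : f.natTrailingDegree = 0 := natTrailingDegree_eq_zero.mpr (Or.inr h0)
  have hrevdeg : f.reverse.natDegree = f.natDegree := by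
    rw [reverse_natDegree, htd, Nat.sub_zero]
  have hcdeg : (crecip f).natDegree = f.natDegree := by
    rw [crecip, natDegree_C_mul (inv_ne_zero h0), hrevdeg]
  have hcmon : (crecip f).Monic := by
    have htc : f.trailingCoeff = f.coeff 0 := by rw [Polynomial.trailingCoeff, htd]
    have : (crecip f).leadingCoeff = 1 := by
      rw [crecip, leadingCoeff_mul, leadingCoeff_C, reverse_leadingCoeff, htc,
        inv_mul_cancel₀ h0]
    exact this
  haveI := hchar
  haveI := Fact.mk hp
  set φ : F →+* F := iterateFrobenius F p k with hφdef
  have hφ : ∀ a, φ a = a ^ q := fun a => by rw [hφdef, iterateFrobenius_def, hkq]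
  have hdmon : (cdagger q f).Monic := by
    rw [cdagger_eq_map φ hφ]; exact hcmon.map φ
  have hddeg : (cdagger q f).natDegree = f.natDegree := by
    rw [cdagger_eq_map φ hφ, natDegree_map_eq_of_injective φ.injective, hcdeg]
  -- divisibility
  have ht0 : t ≠ 0 := x.ne_zero
  have hrootd : aeval (t⁻¹ ^ q) (cdagger q f) = 0 :=
    aeval_cdagger_root hp hchar hkq ht0 (minpoly.aeval F t)
  have hminb : f = minpoly F (t⁻¹ ^ q) :=
    minpoly.eq_of_irreducible_of_monic hirr hconj hmon
  have hdvd : f ∣ cdagger q f := by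
    have h5 : minpoly F (t⁻¹ ^ q) ∣ cdagger q f := minpoly.dvd F _ hrootd
    rwa [← hminb] at h5
  exact eq_of_monic_dvd_deg hmon hdmon hdvd (le_of_eq hddeg)

private lemma conj_of_scrim {F : Type*} [Field F] {p k q : ℕ} (hp : p.Prime)
    (hchar : CharP F p) (hkq : p ^ k = q) {t : AlgebraicClosure F} (ht : t ≠ 0)
    (hscrim : IsSCRIM q (minpoly F t)) :
    aeval (t⁻¹ ^ q) (minpoly F t) = 0 := by
  have h := aeval_cdagger_root hp hchar hkq ht (minpoly.aeval F t)
  rwa [← hscrim.2.2] at h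

/-- Two roots of unity with the same minimal polynomial over a finite field are
Frobenius-conjugate. -/
private lemma conj_exists {F : Type*} [Field F] [Fintype F] {p : ℕ} (hp : p.Prime)
    (hchar : CharP F p) {n : ℕ} (hn : 0 < n) (hQn : (Fintype.card F).Coprime n)
    {a b : AlgebraicClosure F} (ha : a ^ n = 1) (hbint : IsIntegral F b)
    (hmin : minpoly F a = minpoly F b) :
    ∃ j : ℕ, b = a ^ (Fintype.card F) ^ j := by
  classical
  haveI := hchar
  haveI := Fact.mk hp
  set Q := Fintype.card F with hQdef
  have hQ1 : 1 ≤ Q := Fintype.card_pos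
  set m := n.totient with hmdef
  have hm : 0 < m := Nat.totient_pos.mpr hn
  -- periodicity
  have hsplit : ∃ s, Q ^ m = n * s + 1 := by
    have h1 := Nat.ModEq.pow_totient hQn
    have h2 : 1 ≤ Q ^ m := Nat.one_le_pow _ _ hQ1
    obtain ⟨s, hs⟩ := (Nat.modEq_iff_dvd' h2).mp h1.symm
    exact ⟨s, by omega⟩
  obtain ⟨s, hs⟩ := hsplit
  have hper : a ^ Q ^ m = a := by
    rw [hs, pow_add, pow_mul, ha, one_pow, one_mul, pow_one]
  -- the orbit finset
  set orb : Finset (AlgebraicClosure F) := (Finset.range m).image (fun j => a ^ Q ^ j) with horb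
  have hmem_orb : ∀ j : ℕ, a ^ Q ^ j ∈ orb := by
    intro j
    induction j using Nat.strong_induction_on with
    | _ j ih =>
      by_cases hj : j < m
      · exact Finset.mem_image.mpr ⟨j, Finset.mem_range.mpr hj, rfl⟩
      · have hj' : j - m < j := by omega
        have hQj : Q ^ j = Q ^ m * Q ^ (j - m) := by
          rw [← pow_add]
          congr 1
          omega
        rw [hQj, pow_mul, hper]
        exact ih _ hj'
  have ha_orb : a ∈ orb := by
    have := hmem_orb 0
    simpa using this
  -- Frobenius ring hom on K
  obtain ⟨d, -, hcard⟩ := FiniteField.card F p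
  set Φ : AlgebraicClosure F →+* AlgebraicClosure F := iterateFrobenius (AlgebraicClosure F) p d with hΦdef
  have hΦ : ∀ x : AlgebraicClosure F, Φ x = x ^ Q := fun x => by
    rw [hΦdef, iterateFrobenius_def, hQdef, hcard]
  have hinj : Function.Injective (fun x : AlgebraicClosure F => x ^ Q) := by
    intro x y hxy
    have hxy2 : Φ x = Φ y := by rw [hΦ, hΦ]; exact hxy
    exact Φ.injective hxy2
  -- orbit is Φ-stable
  have hstab : ∀ x ∈ orb, x ^ Q ∈ orb := by
    intro x hx
    rw [horb, Finset.mem_image] at hx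
    obtain ⟨j, -, rfl⟩ := hx
    have : (a ^ Q ^ j) ^ Q = a ^ Q ^ (j + 1) := by
      rw [← pow_mul, ← pow_succ]
    rw [this]
    exact hmem_orb (j + 1)
  set g : (AlgebraicClosure F)[X] := ∏ x ∈ orb, (X - C x) with hg
  have hmapg : g.map Φ = g := by
    rw [hg, Polynomial.map_prod]
    simp only [Polynomial.map_sub, map_X, map_C]
    have himg : orb.image (fun x => x ^ Q) = orb := by
      apply Finset.eq_of_subset_of_card_le
      · intro y hy
        rw [Finset.mem_image] at hy
        obtain ⟨x, hx, rfl⟩ := hy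
        exact hstab x hx
      · rw [Finset.card_image_of_injective _ hinj]
    calc ∏ x ∈ orb, (X - C (Φ x)) = ∏ x ∈ orb, (X - C (x ^ Q)) := by
          simp_rw [hΦ]
      _ = ∏ y ∈ orb.image (fun x => x ^ Q), (X - C y) := by
          rw [Finset.prod_image (fun x _ y _ h => hinj h)]
      _ = g := by rw [himg, hg]
  -- coefficients lie in F
  have hcoeff : ∀ i, g.coeff i ∈ Set.range (algebraMap F (AlgebraicClosure F)) := by
    intro i
    have h1 : (g.map Φ).coeff i = Φ (g.coeff i) := coeff_map _ _
    rw [hmapg] at h1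
    have h2 : (g.coeff i) ^ Q = g.coeff i := by rw [← hΦ]; exact h1.symm
    exact mem_range_of_pow_card h2
  obtain ⟨g₀, hg₀⟩ := (Polynomial.mem_lifts _).mp
    ((Polynomial.lifts_iff_coeff_lifts _).mpr hcoeff)
  -- a is a root of g₀
  have haroot : aeval a g₀ = 0 := by
    rw [aeval_def, ← eval_map, hg₀, hg, eval_prod]
    exact Finset.prod_eq_zero ha_orb (by simp)
  have hdvd : minpoly F a ∣ g₀ := minpoly.dvd F a haroot
  -- b is a root of g
  have hbroot : eval b g = 0 := by
    obtain ⟨c, hc⟩ := hdvd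
    have hb1 : aeval b (minpoly F a) = 0 := by rw [hmin]; exact minpoly.aeval F b
    rw [← hg₀, hc, Polynomial.map_mul, eval_mul]
    rw [aeval_def, ← eval_map] at hb1
    rw [hb1, zero_mul]
  rw [hg, eval_prod, Finset.prod_eq_zero_iff] at hbroot
  obtain ⟨x, hx, hbx⟩ := hbroot
  rw [eval_sub, eval_X, eval_C, sub_eq_zero] at hbx
  rw [horb, Finset.mem_image] at hx
  obtain ⟨j, -, rfl⟩ := hx
  exact ⟨j, hbx⟩

private def frobRel (F : Type*) [Field F] (q n : ℕ) :
    {x : (AlgebraicClosure F)ˣ // x ^ n = 1} → {x : (AlgebraicClosure F)ˣ // x ^ n = 1} → Prop :=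
  fun x y => ∃ j : ℕ, (y : (AlgebraicClosure F)ˣ) = (x : (AlgebraicClosure F)ˣ) ^ (q ^ 2) ^ j

private lemma frobRel_equiv {F : Type*} [Field F] {q n : ℕ} (hq0 : 0 < q) (hn : 0 < n)
    (hcop : (q ^ 2).Coprime n) : Equivalence (frobRel F q n) := by
  set m := n.totient with hmdef
  have hm : 0 < m := Nat.totient_pos.mpr hn
  have hsplit : ∃ s, (q ^ 2) ^ m = n * s + 1 := by
    have h1 := Nat.ModEq.pow_totient hcop
    have h2 : 1 ≤ (q ^ 2) ^ m := Nat.one_le_pow _ _ (by positivity)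
    obtain ⟨s, hs⟩ := (Nat.modEq_iff_dvd' h2).mp h1.symm
    exact ⟨s, by omega⟩
  obtain ⟨s, hs⟩ := hsplit
  have hper : ∀ x : {x : (AlgebraicClosure F)ˣ // x ^ n = 1},
      (x : (AlgebraicClosure F)ˣ) ^ ((q ^ 2) ^ m) = (x : (AlgebraicClosure F)ˣ) := by
    intro x
    rw [hs, pow_add, pow_mul, x.2, one_pow, one_mul, pow_one]
  have hper' : ∀ (x : {x : (AlgebraicClosure F)ˣ // x ^ n = 1}) (s' : ℕ),
      (x : (AlgebraicClosure F)ˣ) ^ ((q ^ 2) ^ (m * s')) = (x : (AlgebraicClosure F)ˣ) := by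
    intro x s'
    induction s' with
    | zero => simp
    | succ s' ih =>
      have : (q ^ 2 : ℕ) ^ (m * (s' + 1)) = (q ^ 2) ^ (m * s') * (q ^ 2) ^ m := by
        rw [← pow_add]; ring_nf
      rw [this, pow_mul, ih, hper]
  constructor
  · intro x; exact ⟨0, by simp⟩
  · rintro x y ⟨j, hj⟩
    refine ⟨j * m - j, ?_⟩
    rw [hj, ← pow_mul, ← pow_add]
    have hjm : j ≤ j * m := Nat.le_mul_of_pos_right j hm
    have hexp : j + (j * m - j) = m * j := by rw [mul_comm m j]; omega
    rw [hexp, hper']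
  · rintro x y z ⟨j, hj⟩ ⟨i, hi⟩
    exact ⟨j + i, by rw [hi, hj, ← pow_mul, ← pow_add]⟩

private def frobSetoid (F : Type*) [Field F] (q n : ℕ) (h : Equivalence (frobRel F q n)) :
    Setoid {x : (AlgebraicClosure F)ˣ // x ^ n = 1} :=
  ⟨frobRel F q n, h⟩

private lemma val_pow_eq_one {F : Type*} [Field F] {n : ℕ}
    (x : {x : (AlgebraicClosure F)ˣ // x ^ n = 1}) :
    ((x : (AlgebraicClosure F)ˣ) : AlgebraicClosure F) ^ n = 1 := by
  have := congrArg (Units.val) x.2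
  rwa [Units.val_pow_eq_pow_val, Units.val_one] at this

private lemma card_scrim {F : Type*} [Field F] [Fintype F] {p k q n : ℕ} (hp : p.Prime)
    (hchar : CharP F p) (hkq : p ^ k = q) (hF : Fintype.card F = q ^ 2) (hn : 0 < n)
    (hcop : (q ^ 2).Coprime n) (heq : Equivalence (frobRel F q n))
    (hall : ∀ x : {x : (AlgebraicClosure F)ˣ // x ^ n = 1},
      IsSCRIM q (minpoly F (((x : (AlgebraicClosure F)ˣ)) : AlgebraicClosure F))) :
    Nat.card (scrimFactors F q n) = Nat.card (Quotient (frobSetoid F q n heq)) := by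
  classical
  have hmem : ∀ x : {x : (AlgebraicClosure F)ˣ // x ^ n = 1},
      minpoly F (((x : (AlgebraicClosure F)ˣ)) : AlgebraicClosure F) ∈ scrimFactors F q n := by
    intro x
    exact ⟨hall x, minpoly_dvd_X_pow_sub_one (val_pow_eq_one x)⟩
  set func : {x : (AlgebraicClosure F)ˣ // x ^ n = 1} → (scrimFactors F q n : Set F[X]) :=
    fun x => ⟨minpoly F (((x : (AlgebraicClosure F)ˣ)) : AlgebraicClosure F), hmem x⟩ with hfunc
  have hresp : ∀ x y, frobRel F q n x y → func x = func y := by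
    rintro x y ⟨j, hj⟩
    apply Subtype.ext
    have hint : IsIntegral F (((x : (AlgebraicClosure F)ˣ)) : AlgebraicClosure F) :=
      unit_pow_integral hn.ne' (val_pow_eq_one x)
    have hyval : (((y : (AlgebraicClosure F)ˣ)) : AlgebraicClosure F)
        = (((x : (AlgebraicClosure F)ˣ)) : AlgebraicClosure F) ^ (q ^ 2) ^ j := by
      have := congrArg (Units.val) hj
      rwa [Units.val_pow_eq_pow_val] at this
    have hroot : aeval (((y : (AlgebraicClosure F)ˣ) : AlgebraicClosure F))
        (minpoly F (((x : (AlgebraicClosure F)ˣ)) : AlgebraicClosure F)) = 0 := by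
      rw [hyval]
      exact aeval_pow_card_pow_root hp hchar hF (minpoly.aeval F _) j
    exact minpoly.eq_of_irreducible_of_monic (minpoly.irreducible hint) hroot
      (minpoly.monic hint)
  set flift : Quotient (frobSetoid F q n heq) → (scrimFactors F q n : Set F[X]) :=
    Quotient.lift func hresp with hflift
  have hbij : Function.Bijective flift := by
    constructor
    · intro c1 c2
      induction c1 using Quotient.ind with
      | _ x =>
      induction c2 using Quotient.ind with
      | _ y =>
      intro h
      have hmineq : minpoly F (((x : (AlgebraicClosure F)ˣ)) : AlgebraicClosure F)
          = minpoly F (((y : (AlgebraicClosure F)ˣ)) : AlgebraicClosure F) :=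
        congrArg Subtype.val h
      have hbint : IsIntegral F (((y : (AlgebraicClosure F)ˣ)) : AlgebraicClosure F) :=
        unit_pow_integral hn.ne' (val_pow_eq_one y)
      obtain ⟨j, hj⟩ := conj_exists hp hchar hn (by rw [hF]; exact hcop)
        (val_pow_eq_one x) hbint hmineq
      rw [hF] at hj
      apply Quotient.sound
      refine ⟨j, Units.ext ?_⟩
      rwa [Units.val_pow_eq_pow_val]
    · rintro ⟨f, hscrim, hdvd⟩
      have hirr := hscrim.2.1
      have hmon := hscrim.1
      have hfK : (f.map (algebraMap F (AlgebraicClosure F))).degree ≠ 0 := by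
        rw [degree_map_eq_of_injective (algebraMap F (AlgebraicClosure F)).injective]
        have h1 : 0 < f.natDegree := hirr.natDegree_pos
        intro hdeg0
        rw [degree_eq_natDegree hmon.ne_zero] at hdeg0
        simp at hdeg0
        omega
      obtain ⟨z, hz⟩ := IsAlgClosed.exists_root _ hfK
      have hzroot : aeval z f = 0 := by
        rwa [aeval_def, ← eval_map]
      have hzn : z ^ n = 1 := by
        obtain ⟨c, hc⟩ := hdvd
        have : aeval z ((X : F[X]) ^ n - 1) = 0 := by
          rw [hc, map_mul, hzroot, zero_mul]
        rw [map_sub, map_pow, aeval_X, map_one, sub_eq_zero] at this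
        exact this
      have hz0 : z ≠ 0 := by
        intro h0
        rw [h0, zero_pow hn.ne'] at hzn
        exact zero_ne_one hzn
      set u : (AlgebraicClosure F)ˣ := Units.mk0 z hz0 with hu
      have hun : u ^ n = 1 := by
        apply Units.ext
        rw [Units.val_pow_eq_pow_val]
        exact hzn
      refine ⟨⟦⟨u, hun⟩⟧, ?_⟩
      apply Subtype.ext
      exact (minpoly.eq_of_irreducible_of_monic hirr hzroot hmon).symm
  exact (Nat.card_congr (Equiv.ofBijective flift hbij)).symm

private lemma card_quot_split {F : Type*} [Field F] {q l₁ l₂ : ℕ}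
    (hl1 : 1 < l₁) (hl2 : 1 < l₂) (hco : l₁.Coprime l₂)
    (hord : (orderOf ((q : ZMod l₁) ^ 2)).Coprime (orderOf ((q : ZMod l₂) ^ 2)))
    (heq12 : Equivalence (frobRel F q (l₁ * l₂)))
    (heq1 : Equivalence (frobRel F q l₁)) (heq2 : Equivalence (frobRel F q l₂)) :
    Nat.card (Quotient (frobSetoid F q (l₁ * l₂) heq12)) =
      Nat.card (Quotient (frobSetoid F q l₁ heq1)) *
        Nat.card (Quotient (frobSetoid F q l₂ heq2)) := by
  classical
  set Q := q ^ 2 with hQdef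
  set π₁ : {x : (AlgebraicClosure F)ˣ // x ^ (l₁ * l₂) = 1} →
      {x : (AlgebraicClosure F)ˣ // x ^ l₁ = 1} :=
    fun x => ⟨(x : (AlgebraicClosure F)ˣ) ^ l₂, by
      rw [← pow_mul, mul_comm l₂ l₁]; exact x.2⟩ with hπ₁
  set π₂ : {x : (AlgebraicClosure F)ˣ // x ^ (l₁ * l₂) = 1} →
      {x : (AlgebraicClosure F)ˣ // x ^ l₂ = 1} :=
    fun x => ⟨(x : (AlgebraicClosure F)ˣ) ^ l₁, by
      rw [← pow_mul]; exact x.2⟩ with hπ₂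
  set gfun : {x : (AlgebraicClosure F)ˣ // x ^ (l₁ * l₂) = 1} →
      Quotient (frobSetoid F q l₁ heq1) × Quotient (frobSetoid F q l₂ heq2) :=
    fun x => (Quotient.mk _ (π₁ x), Quotient.mk _ (π₂ x)) with hgfun
  have hresp : ∀ x y, frobRel F q (l₁ * l₂) x y → gfun x = gfun y := by
    rintro x y ⟨j, hj⟩
    have h1 : frobRel F q l₁ (π₁ x) (π₁ y) :=
      ⟨j, by simp only [hπ₁]; rw [hj, ← pow_mul, mul_comm ((q ^ 2) ^ j) l₂, pow_mul]⟩
    have h2 : frobRel F q l₂ (π₂ x) (π₂ y) :=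
      ⟨j, by simp only [hπ₂]; rw [hj, ← pow_mul, mul_comm ((q ^ 2) ^ j) l₁, pow_mul]⟩
    rw [hgfun]
    exact Prod.ext (Quotient.sound h1) (Quotient.sound h2)
  set glift : Quotient (frobSetoid F q (l₁ * l₂) heq12) →
      Quotient (frobSetoid F q l₁ heq1) × Quotient (frobSetoid F q l₂ heq2) :=
    Quotient.lift gfun hresp with hglift
  have hbij : Function.Bijective glift := by
    constructor
    · intro c1 c2
      induction c1 using Quotient.ind with
      | _ x =>
      induction c2 using Quotient.ind with
      | _ y =>
      intro h
      have h1 := congrArg Prod.fst h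
      have h2 := congrArg Prod.snd h
      obtain ⟨i, hi⟩ : frobRel F q l₁ (π₁ x) (π₁ y) := Quotient.exact h1
      obtain ⟨j, hj⟩ : frobRel F q l₂ (π₂ x) (π₂ y) := Quotient.exact h2
      obtain ⟨c, hc1, hc2⟩ := Nat.chineseRemainder hord i j
      apply Quotient.sound
      refine ⟨c, ?_⟩
      have hx1 : ((x : (AlgebraicClosure F)ˣ) ^ l₂) ^ l₁ = 1 := (π₁ x).2
      have hx2 : ((x : (AlgebraicClosure F)ˣ) ^ l₁) ^ l₂ = 1 := (π₂ x).2
      have key1 : ((x : (AlgebraicClosure F)ˣ) ^ l₂) ^ Q ^ c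
          = ((x : (AlgebraicClosure F)ˣ) ^ l₂) ^ Q ^ i :=
        pow_frob_congr _ hx1 (modeq_pow_qsq hc1)
      have key2 : ((x : (AlgebraicClosure F)ˣ) ^ l₁) ^ Q ^ c
          = ((x : (AlgebraicClosure F)ˣ) ^ l₁) ^ Q ^ j :=
        pow_frob_congr _ hx2 (modeq_pow_qsq hc2)
      apply units_eq_of_pows hco.symm
      · -- l₂-th powers
        have : (y : (AlgebraicClosure F)ˣ) ^ l₂ = ((x : (AlgebraicClosure F)ˣ) ^ l₂) ^ Q ^ i := hi
        rw [pow_right_comm, this, key1.symm, pow_right_comm]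
      · have : (y : (AlgebraicClosure F)ˣ) ^ l₁ = ((x : (AlgebraicClosure F)ˣ) ^ l₁) ^ Q ^ j := hj
        rw [pow_right_comm, this, key2.symm, pow_right_comm]
    · rintro ⟨c1, c2⟩
      induction c1 using Quotient.ind with
      | _ x1 =>
      induction c2 using Quotient.ind with
      | _ x2 =>
      obtain ⟨u, -, hu⟩ := Nat.exists_mul_mod_eq_one_of_coprime hco.symm hl1
      obtain ⟨v, -, hv⟩ := Nat.exists_mul_mod_eq_one_of_coprime hco hl2
      have hu' : l₂ * u ≡ 1 [MOD l₁] := by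
        show (l₂ * u) % l₁ = 1 % l₁
        rw [Nat.mod_eq_of_lt hl1, hu]
      have hv' : l₁ * v ≡ 1 [MOD l₂] := by
        show (l₁ * v) % l₂ = 1 % l₂
        rw [Nat.mod_eq_of_lt hl2, hv]
      set w : (AlgebraicClosure F)ˣ :=
        (x1 : (AlgebraicClosure F)ˣ) ^ u * (x2 : (AlgebraicClosure F)ˣ) ^ v with hw
      have e1 : ((x1 : (AlgebraicClosure F)ˣ) ^ u) ^ (l₁ * l₂) = 1 := by
        rw [← pow_mul, show u * (l₁ * l₂) = l₁ * (u * l₂) by ring, pow_mul, x1.2, one_pow]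
      have e2 : ((x2 : (AlgebraicClosure F)ˣ) ^ v) ^ (l₁ * l₂) = 1 := by
        rw [← pow_mul, show v * (l₁ * l₂) = l₂ * (v * l₁) by ring, pow_mul, x2.2, one_pow]
      have hwpow : w ^ (l₁ * l₂) = 1 := by
        rw [hw, mul_pow, e1, e2, one_mul]
      refine ⟨⟦⟨w, hwpow⟩⟧, ?_⟩
      have hw1 : π₁ ⟨w, hwpow⟩ = x1 := by
        apply Subtype.ext
        show w ^ l₂ = _
        have e3 : ((x2 : (AlgebraicClosure F)ˣ) ^ v) ^ l₂ = 1 := by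
          rw [← pow_mul, show v * l₂ = l₂ * v by ring, pow_mul, x2.2, one_pow]
        have e4 : ((x1 : (AlgebraicClosure F)ˣ) ^ u) ^ l₂ = (x1 : (AlgebraicClosure F)ˣ) := by
          rw [← pow_mul, show u * l₂ = l₂ * u by ring]
          have h9 := pow_eq_pow_of_modEq' (x1 : (AlgebraicClosure F)ˣ)
            (hu'.of_dvd (orderOf_dvd_of_pow_eq_one x1.2))
          rw [h9, pow_one]
        rw [hw, mul_pow, e3, e4, mul_one]
      have hw2 : π₂ ⟨w, hwpow⟩ = x2 := by
        apply Subtype.ext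
        show w ^ l₁ = _
        have e3 : ((x1 : (AlgebraicClosure F)ˣ) ^ u) ^ l₁ = 1 := by
          rw [← pow_mul, show u * l₁ = l₁ * u by ring, pow_mul, x1.2, one_pow]
        have e4 : ((x2 : (AlgebraicClosure F)ˣ) ^ v) ^ l₁ = (x2 : (AlgebraicClosure F)ˣ) := by
          rw [← pow_mul, show v * l₁ = l₁ * v by ring]
          have h9 := pow_eq_pow_of_modEq' (x2 : (AlgebraicClosure F)ˣ)
            (hv'.of_dvd (orderOf_dvd_of_pow_eq_one x2.2))
          rw [h9, pow_one]
        rw [hw, mul_pow, e3, e4, one_mul]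
      show gfun _ = _
      simp only [hgfun]
      rw [hw1, hw2]
  rw [Nat.card_congr (Equiv.ofBijective glift hbij), Nat.card_prod]

theorem stmt10 {q l₁ l₂ : ℕ} (hq : IsPrimePow q)
    {F : Type*} [Field F] [Fintype F] (hF : Fintype.card F = q ^ 2)
    (hl₁ : l₁.Prime) (hl₂ : l₂.Prime) (hodd₁ : Odd l₁) (hodd₂ : Odd l₂)
    (hne : l₁ ≠ l₂) (h1q : Nat.Coprime l₁ q) (h2q : Nat.Coprime l₂ q)
    (hall₁ : ∀ f : F[X], f.Monic → Irreducible f → f ∣ X ^ l₁ - 1 → IsSCRIM q f)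
    (hall₂ : ∀ f : F[X], f.Monic → Irreducible f → f ∣ X ^ l₂ - 1 → IsSCRIM q f)
    (hord : Nat.Coprime (orderOf ((q : ZMod l₁) ^ 2)) (orderOf ((q : ZMod l₂) ^ 2))) :
    (scrimFactors F q (l₁ * l₂)).ncard =
      (scrimFactors F q l₁).ncard * (scrimFactors F q l₂).ncard := by
  classical
  obtain ⟨p, k, hpp, hk, hpk⟩ := hq
  have hp : p.Prime := hpp.nat_prime
  have hq0 : 0 < q := by rw [← hpk]; exact pow_pos hp.pos k
  have hchar : CharP F p := aux_charP hp (show 0 < k * 2 by omega)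
    (by rw [hF, ← hpk, ← pow_mul])
  have hco : l₁.Coprime l₂ := (Nat.coprime_primes hl₁ hl₂).mpr hne
  have hcop1 : (q ^ 2).Coprime l₁ := h1q.symm.pow_left 2
  have hcop2 : (q ^ 2).Coprime l₂ := h2q.symm.pow_left 2
  have hcop12 : (q ^ 2).Coprime (l₁ * l₂) := Nat.Coprime.mul_right hcop1 hcop2
  have hl1p : 0 < l₁ := hl₁.pos
  have hl2p : 0 < l₂ := hl₂.pos
  have hl12p : 0 < l₁ * l₂ := by positivity
  have heq1 := frobRel_equiv (F := F) hq0 hl1p hcop1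
  have heq2 := frobRel_equiv (F := F) hq0 hl2p hcop2
  have heq12 := frobRel_equiv (F := F) hq0 hl12p hcop12
  -- all minimal polynomials of l₁-th and l₂-th roots of unity are SCRIM
  have hall₁' : ∀ x : {x : (AlgebraicClosure F)ˣ // x ^ l₁ = 1},
      IsSCRIM q (minpoly F (((x : (AlgebraicClosure F)ˣ)) : AlgebraicClosure F)) := by
    intro x
    have hint := unit_pow_integral hl1p.ne' (val_pow_eq_one x)
    exact hall₁ _ (minpoly.monic hint) (minpoly.irreducible hint)
      (minpoly_dvd_X_pow_sub_one (val_pow_eq_one x))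
  have hall₂' : ∀ x : {x : (AlgebraicClosure F)ˣ // x ^ l₂ = 1},
      IsSCRIM q (minpoly F (((x : (AlgebraicClosure F)ˣ)) : AlgebraicClosure F)) := by
    intro x
    have hint := unit_pow_integral hl2p.ne' (val_pow_eq_one x)
    exact hall₂ _ (minpoly.monic hint) (minpoly.irreducible hint)
      (minpoly_dvd_X_pow_sub_one (val_pow_eq_one x))
  -- key step : conjugation exponent for each prime
  have step : ∀ (l : ℕ), 0 < l → (q ^ 2).Coprime l →
      (∀ f : F[X], f.Monic → Irreducible f → f ∣ X ^ l - 1 → IsSCRIM q f) →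
      ∀ z : (AlgebraicClosure F)ˣ, z ^ l = 1 →
        ∃ a : ℕ, (z⁻¹) ^ q = z ^ (q ^ 2) ^ a := by
    intro l hl hcopl halll z hz
    have hzval : ((z : AlgebraicClosure F)) ^ l = 1 := by
      have := congrArg Units.val hz
      rwa [Units.val_pow_eq_pow_val, Units.val_one] at this
    have hint : IsIntegral F (z : AlgebraicClosure F) := unit_pow_integral hl.ne' hzval
    have hscrim := halll _ (minpoly.monic hint) (minpoly.irreducible hint)
      (minpoly_dvd_X_pow_sub_one hzval)
    have hroot : aeval ((z : AlgebraicClosure F)⁻¹ ^ q)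
        (minpoly F (z : AlgebraicClosure F)) = 0 :=
      conj_of_scrim hp hchar hpk z.ne_zero hscrim
    have hbpow : ((z : AlgebraicClosure F)⁻¹ ^ q) ^ l = 1 := by
      rw [← pow_mul, mul_comm q l, pow_mul, inv_pow, hzval, inv_one, one_pow]
    have hbint : IsIntegral F ((z : AlgebraicClosure F)⁻¹ ^ q) :=
      unit_pow_integral hl.ne' hbpow
    have hminb : minpoly F (z : AlgebraicClosure F)
        = minpoly F ((z : AlgebraicClosure F)⁻¹ ^ q) :=
      minpoly.eq_of_irreducible_of_monic (minpoly.irreducible hint) hroot (minpoly.monic hint)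
    obtain ⟨a, ha⟩ := conj_exists hp hchar hl (by rw [hF]; exact hcopl) hzval hbint hminb
    rw [hF] at ha
    refine ⟨a, Units.ext ?_⟩
    simp only [Units.val_pow_eq_pow_val, Units.val_inv_eq_inv_val]
    exact ha
  -- all minimal polynomials of (l₁ l₂)-th roots of unity are SCRIM
  have hall₁₂' : ∀ x : {x : (AlgebraicClosure F)ˣ // x ^ (l₁ * l₂) = 1},
      IsSCRIM q (minpoly F (((x : (AlgebraicClosure F)ˣ)) : AlgebraicClosure F)) := by
    intro x
    set z₁ : (AlgebraicClosure F)ˣ := (x : (AlgebraicClosure F)ˣ) ^ l₂ with hz₁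
    set z₂ : (AlgebraicClosure F)ˣ := (x : (AlgebraicClosure F)ˣ) ^ l₁ with hz₂
    have hz₁pow : z₁ ^ l₁ = 1 := by rw [hz₁, ← pow_mul, mul_comm l₂ l₁]; exact x.2
    have hz₂pow : z₂ ^ l₂ = 1 := by rw [hz₂, ← pow_mul]; exact x.2
    obtain ⟨a, hA⟩ := step l₁ hl1p hcop1 hall₁ z₁ hz₁pow
    obtain ⟨b, hB⟩ := step l₂ hl2p hcop2 hall₂ z₂ hz₂pow
    obtain ⟨c, hc1, hc2⟩ := Nat.chineseRemainder hord a b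
    have key1 : z₁ ^ (q ^ 2) ^ c = z₁ ^ (q ^ 2) ^ a :=
      pow_frob_congr _ hz₁pow (modeq_pow_qsq hc1)
    have key2 : z₂ ^ (q ^ 2) ^ c = z₂ ^ (q ^ 2) ^ b :=
      pow_frob_congr _ hz₂pow (modeq_pow_qsq hc2)
    have hmain : ((x : (AlgebraicClosure F)ˣ))⁻¹ ^ q
        = (x : (AlgebraicClosure F)ˣ) ^ (q ^ 2) ^ c := by
      apply units_eq_of_pows hco
      · -- l₁-th powers
        calc (((x : (AlgebraicClosure F)ˣ))⁻¹ ^ q) ^ l₁ = (z₂⁻¹) ^ q := by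
              rw [hz₂, ← inv_pow, ← pow_mul, ← pow_mul, mul_comm q l₁]
          _ = z₂ ^ (q ^ 2) ^ b := hB
          _ = z₂ ^ (q ^ 2) ^ c := key2.symm
          _ = ((x : (AlgebraicClosure F)ˣ) ^ (q ^ 2) ^ c) ^ l₁ := by
              rw [hz₂, ← pow_mul, mul_comm l₁ ((q ^ 2) ^ c), pow_mul]
      · calc (((x : (AlgebraicClosure F)ˣ))⁻¹ ^ q) ^ l₂ = (z₁⁻¹) ^ q := by
              rw [hz₁, ← inv_pow, ← pow_mul, ← pow_mul, mul_comm q l₂]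
          _ = z₁ ^ (q ^ 2) ^ a := hA
          _ = z₁ ^ (q ^ 2) ^ c := key1.symm
          _ = ((x : (AlgebraicClosure F)ˣ) ^ (q ^ 2) ^ c) ^ l₂ := by
              rw [hz₁, ← pow_mul, mul_comm l₂ ((q ^ 2) ^ c), pow_mul]
    apply scrim_of_conj hp hchar hpk hl12p.ne' (x : (AlgebraicClosure F)ˣ) (val_pow_eq_one x)
    have hval : (((x : (AlgebraicClosure F)ˣ)) : AlgebraicClosure F)⁻¹ ^ q
        = (((x : (AlgebraicClosure F)ˣ)) : AlgebraicClosure F) ^ (q ^ 2) ^ c := by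
      have := congrArg Units.val hmain
      simpa only [Units.val_pow_eq_pow_val, Units.val_inv_eq_inv_val] using this
    rw [hval]
    exact aeval_pow_card_pow_root hp hchar hF (minpoly.aeval F _) c
  -- assemble the count
  have h1 := card_scrim hp hchar hpk hF hl1p hcop1 heq1 hall₁'
  have h2 := card_scrim hp hchar hpk hF hl2p hcop2 heq2 hall₂'
  have h12 := card_scrim hp hchar hpk hF hl12p hcop12 heq12 hall₁₂'
  have hsplit := card_quot_split (F := F) hl₁.one_lt hl₂.one_lt hco hord heq12 heq1 heq2
  rw [← Nat.card_coe_set_eq, ← Nat.card_coe_set_eq, ← Nat.card_coe_set_eq,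
    h1, h2, h12, hsplit]
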